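/- Let n ≥ 2 be an integer. For every w₀ ∈ ℝ there exists a continuously differentiable function w : (−π/2, π/2) → ℝ with w(0) = w₀ satisfying w'(s) = (1 + w(s)²)·(1 − (n−1)·tan(s)·w(s)) for every s ∈ (−π/2, π/2). -/

import Mathlib

open Set Filter Real
namespace SphereSolitonAux
noncomputable section

def vf (m t x : ℝ) : ℝ := (1 + x ^ 2) * (1 - m * Real.tan t * x)
def clamp (K x : ℝ) : ℝ := max (-K) (min K x)

lemma clamp_le_self {K x : ℝ} (h : -K ≤ x) : clamp K x ≤ x :=
  max_le h (min_le_right _ _)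

lemma clamp_pos {K x : ℝ} (hK : 0 < K) (hx : 0 < x) : 0 < clamp K x :=
  lt_max_of_lt_right (lt_min hK hx)

lemma clamp_nonpos {K x : ℝ} (hK : 0 ≤ K) (hx : x ≤ 0) : clamp K x ≤ 0 :=
  max_le (neg_nonpos.2 hK) ((min_le_right _ _).trans hx)

lemma abs_clamp_le {K x : ℝ} (hK : 0 ≤ K) : |clamp K x| ≤ K :=
  abs_le.2 ⟨le_max_left _ _, max_le (by linarith) (min_le_left _ _)⟩

lemma clamp_eq_self {K x : ℝ} (h : |x| ≤ K) : clamp K x = x := by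
  rcases abs_le.1 h with ⟨h1, h2⟩
  rw [clamp, min_eq_right h2, max_eq_right h1]

lemma le_clamp {K x b : ℝ} (hbK : b ≤ K) (hbx : b ≤ x) : b ≤ clamp K x :=
  le_max_of_le_right (le_min hbK hbx)

lemma clamp_neg {K : ℝ} (hK : 0 ≤ K) (x : ℝ) : clamp K (-x) = -clamp K x := by
  simp only [clamp, max_def, min_def]
  split_ifs <;> linarith

/-- If `g` starts nonpositive and has nonpositive derivative wherever it is positive,
then it stays nonpositive. -/
lemma no_upcross {g G : ℝ → ℝ} {c d : ℝ}
    (hg : ContinuousOn g (Icc c d)) (hgc : g c ≤ 0)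
    (hd : ∀ s ∈ Ioo c d, 0 < g s → HasDerivAt g (G s) s)
    (hG : ∀ s ∈ Ioo c d, 0 < g s → G s ≤ 0) :
    ∀ s ∈ Icc c d, g s ≤ 0 := by
  intro s₂ hs₂
  by_contra hpos
  push_neg at hpos
  set S : Set ℝ := Icc c s₂ ∩ g ⁻¹' Iic 0 with hS
  have hcmem : c ∈ S := ⟨⟨le_rfl, hs₂.1⟩, by simpa using hgc⟩
  have hclosed : IsClosed S :=
    (hg.mono (Icc_subset_Icc_right hs₂.2)).preimage_isClosed_of_isClosed isClosed_Icc isClosed_Iic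
  have hbdd : BddAbove S := BddAbove.mono Set.inter_subset_left bddAbove_Icc
  set x := sSup S with hx
  have hxS : x ∈ S := hclosed.csSup_mem ⟨c, hcmem⟩ hbdd
  have hxle : x ≤ s₂ := hxS.1.2
  have hgx : g x ≤ 0 := hxS.2
  have hcx : c ≤ x := hxS.1.1
  have hxlt : x < s₂ := lt_of_le_of_ne hxle (fun h => absurd (h ▸ hgx) (not_le.2 hpos))
  have hgt : ∀ t, x < t → t ≤ s₂ → 0 < g t := by
    intro t ht1 ht2
    by_contra hc'
    push_neg at hc'
    have htS : t ∈ S := ⟨⟨hcx.trans ht1.le, ht2⟩, hc'⟩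
    exact absurd (le_csSup hbdd htS) (not_le.2 ht1)
  have hanti : AntitoneOn g (Icc x s₂) := by
    apply antitoneOn_of_deriv_nonpos (convex_Icc _ _) (hg.mono (Icc_subset_Icc hcx hs₂.2))
    · intro y hy
      rw [interior_Icc] at hy
      have hy' : y ∈ Ioo c d := ⟨lt_of_le_of_lt hcx hy.1, lt_of_lt_of_le hy.2 hs₂.2⟩
      exact ((hd y hy' (hgt y hy.1 hy.2.le)).differentiableAt).differentiableWithinAt
    · intro y hy
      rw [interior_Icc] at hy
      have hy' : y ∈ Ioo c d := ⟨lt_of_le_of_lt hcx hy.1, lt_of_lt_of_le hy.2 hs₂.2⟩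
      rw [(hd y hy' (hgt y hy.1 hy.2.le)).deriv]
      exact hG y hy' (hgt y hy.1 hy.2.le)
  have := hanti (left_mem_Icc.2 hxlt.le) (right_mem_Icc.2 hxlt.le) hxlt.le
  linarith

lemma abs_tan_le {t a : ℝ} (h : |t| ≤ a) (ha : a < π / 2) : |Real.tan t| ≤ Real.tan a := by
  have hπ := Real.pi_pos
  have h0 : (0:ℝ) ≤ a := (abs_nonneg t).trans h
  have h1 : Real.tan |t| ≤ Real.tan a := by
    rcases eq_or_lt_of_le h with h' | h'
    · rw [h']
    · exact (Real.strictMonoOn_tan ⟨by linarith [abs_nonneg t], lt_of_lt_of_le h' ha.le⟩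
        ⟨by linarith, ha⟩ h').le
  rcases abs_cases t with ⟨h2, h3⟩ | ⟨h2, h3⟩
  · rw [h2] at h1
    have hta : t ≤ a := by rw [← h2]; exact h
    rwa [abs_of_nonneg (Real.tan_nonneg_of_nonneg_of_le_pi_div_two h3 (by linarith))]
  · rw [h2, Real.tan_neg] at h1
    have hta : -t ≤ a := by rw [← h2]; exact h
    rwa [abs_of_nonpos (Real.tan_nonpos_of_nonpos_of_neg_pi_div_two_le h3.le (by linarith))]


/-- Half the distance from `T` to `π/2`. -/
def eps (T : ℝ) : ℝ := (π / 2 - T) / 2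

/-- The barrier angle. -/
def Bb (T : ℝ) : ℝ := max (T + eps T) (Real.arctan (2 / Real.tan (eps T)))

/-- The a priori bound for `|w|`. -/
def Ww (T : ℝ) : ℝ := Real.tan (Bb T)

/-- The clamping constant. -/
def Kk (T : ℝ) : ℝ := Ww T + 1

variable {T : ℝ}

lemma eps_pos (hT2 : T < π / 2) : 0 < eps T := by rw [eps]; linarith

lemma eps_le (hT : 0 ≤ T) : eps T ≤ π / 4 := by rw [eps]; linarith

lemma eps_lt_pi_div_two (hT : 0 ≤ T) : eps T < π / 2 := by
  have := Real.pi_pos; have := eps_le hT; linarith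

lemma tan_eps_pos (hT : 0 ≤ T) (hT2 : T < π / 2) : 0 < Real.tan (eps T) :=
  Real.tan_pos_of_pos_of_lt_pi_div_two (eps_pos hT2) (eps_lt_pi_div_two hT)

lemma T_add_eps_lt (hT2 : T < π / 2) : T + eps T < π / 2 := by rw [eps]; linarith

lemma T_add_eps_le_B : T + eps T ≤ Bb T := le_max_left _ _

lemma B_lt_pi_div_two (hT2 : T < π / 2) : Bb T < π / 2 :=
  max_lt (T_add_eps_lt hT2) (Real.arctan_lt_pi_div_two _)

lemma B_pos (hT : 0 ≤ T) (hT2 : T < π / 2) : 0 < Bb T :=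
  lt_of_lt_of_le (by linarith [eps_pos hT2] : (0:ℝ) < T + eps T) (T_add_eps_le_B)

lemma W_pos (hT : 0 ≤ T) (hT2 : T < π / 2) : 0 < Ww T :=
  Real.tan_pos_of_pos_of_lt_pi_div_two (B_pos hT hT2) (B_lt_pi_div_two hT2)

lemma two_div_tan_eps_le_W (hT : 0 ≤ T) (hT2 : T < π / 2) :
    2 / Real.tan (eps T) ≤ Ww T := by
  have h1 : Real.arctan (2 / Real.tan (eps T)) ≤ Bb T := le_max_right _ _
  have h2 := Real.pi_pos
  calc 2 / Real.tan (eps T) = Real.tan (Real.arctan (2 / Real.tan (eps T))) :=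
        (Real.tan_arctan _).symm
    _ ≤ Real.tan (Bb T) := by
        rcases eq_or_lt_of_le h1 with h | h
        · rw [h]
        · exact (Real.strictMonoOn_tan (Real.arctan_mem_Ioo _)
            ⟨by linarith [B_pos hT hT2], B_lt_pi_div_two hT2⟩ h).le

lemma K_pos (hT : 0 ≤ T) (hT2 : T < π / 2) : 0 < Kk T := by
  have := W_pos hT hT2; rw [Kk]; linarith

/-- The key a priori bound (barrier argument): any solution of the clamped ODE on `[0, a]`
starting with `|arctan (w 0)| ≤ T` satisfies `|arctan (w s)| ≤ Bb T`. -/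
lemma theta_bound {m a : ℝ} (hm : 1 ≤ m) (hT : 0 ≤ T) (hT2 : T < π / 2)
    (ha : 0 < a) (ha2 : a < π / 2) {w : ℝ → ℝ}
    (hw : ContinuousOn w (Icc 0 a))
    (hw' : ∀ s ∈ Ioo 0 a, HasDerivAt w (vf m s (clamp (Kk T) (w s))) s)
    (hw0 : |Real.arctan (w 0)| ≤ T) :
    ∀ s ∈ Icc 0 a, |Real.arctan (w s)| ≤ Bb T := by
  have hπ := Real.pi_pos
  have hm0 : (0:ℝ) < m := lt_of_lt_of_le one_pos hm
  have hK0 : 0 < Kk T := K_pos hT hT2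
  have hW0 : 0 < Ww T := W_pos hT hT2
  have hWK : Ww T ≤ Kk T := by rw [Kk]; linarith
  have heps0 : 0 < eps T := eps_pos hT2
  have hepsle : eps T ≤ π / 4 := eps_le hT
  set θ : ℝ → ℝ := fun s => Real.arctan (w s) with hθdef
  have hθc : ContinuousOn θ (Icc 0 a) := Real.continuous_arctan.comp_continuousOn hw
  have hθ' : ∀ s ∈ Ioo 0 a,
      HasDerivAt θ ((1 + (w s) ^ 2)⁻¹ * vf m s (clamp (Kk T) (w s))) s := by
    intro s hs
    have h := (Real.hasDerivAt_arctan (w s)).comp s (hw' s hs)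
    rw [one_div] at h
    exact h
  -- Step 1 : θ s ≤ T + s on [0, min (eps T) a]
  have step1 : ∀ s ∈ Icc 0 (min (eps T) a), θ s - (T + s) ≤ 0 := by
    apply no_upcross (G := fun s => (1 + (w s) ^ 2)⁻¹ * vf m s (clamp (Kk T) (w s)) - 1)
    · exact (hθc.mono (Icc_subset_Icc_right (min_le_right _ _))).sub
        (continuousOn_const.add continuousOn_id)
    · have h := (abs_le.1 hw0).2
      simpa [hθdef] using h
    · intro s hs hpos
      exact (hθ' s ⟨hs.1, lt_of_lt_of_le hs.2 (min_le_right _ _)⟩).sub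
        ((hasDerivAt_id s).const_add T)
    · intro s hs hpos
      have hθs : T + s < θ s := by linarith
      have hspos : 0 < s := hs.1
      have hslt : s < eps T := lt_of_lt_of_le hs.2 (min_le_left _ _)
      have hθpos : 0 < θ s := by linarith
      have hwp : 0 < w s := by
        by_contra hc
        push_neg at hc
        have : θ s ≤ 0 := by
          have := Real.arctan_strictMono.monotone hc
          simpa [hθdef] using this
        linarith
      set y := clamp (Kk T) (w s) with hy
      have hy1 : 0 < y := clamp_pos hK0 hwp
      have hy2 : y ≤ w s := clamp_le_self (by linarith)
      have htan : 0 ≤ Real.tan s :=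
        Real.tan_nonneg_of_nonneg_of_le_pi_div_two hspos.le (by linarith)
      have hP : 0 ≤ m * Real.tan s * y :=
        mul_nonneg (mul_nonneg hm0.le htan) hy1.le
      have hysq : y ^ 2 ≤ (w s) ^ 2 := pow_le_pow_left₀ hy1.le hy2 2
      have hexp : (1 + y ^ 2) * (1 - m * Real.tan s * y)
          = (1 + y ^ 2) - (1 + y ^ 2) * (m * Real.tan s * y) := by ring
      have hprod : 0 ≤ (1 + y ^ 2) * (m * Real.tan s * y) :=
        mul_nonneg (by positivity) hP
      have hv : vf m s y ≤ 1 + (w s) ^ 2 := by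
        rw [vf, hexp] at *
        linarith
      have h1w : (0:ℝ) < 1 + (w s) ^ 2 := by positivity
      have h2 : (1 + (w s) ^ 2)⁻¹ * vf m s y ≤ (1 + (w s) ^ 2)⁻¹ * (1 + (w s) ^ 2) :=
        mul_le_mul_of_nonneg_left hv (by positivity)
      rw [inv_mul_cancel₀ h1w.ne'] at h2
      linarith
  -- upper bound on all of [0, a]
  have upper : ∀ s ∈ Icc 0 a, θ s ≤ Bb T := by
    intro s hs
    rcases le_or_gt s (min (eps T) a) with hcase | hcase
    · have h := step1 s ⟨hs.1, hcase⟩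
      have : s ≤ eps T := hcase.trans (min_le_left _ _)
      have := T_add_eps_le_B (T := T)
      linarith
    · have hea : eps T < a := by
        by_contra hc
        push_neg at hc
        rw [min_eq_right hc] at hcase
        exact absurd hs.2 (not_le.2 hcase)
      have hmin : min (eps T) a = eps T := min_eq_left hea.le
      have key : ∀ t ∈ Icc (eps T) a, θ t - Bb T ≤ 0 := by
        apply no_upcross (G := fun s => (1 + (w s) ^ 2)⁻¹ * vf m s (clamp (Kk T) (w s)))
        · exact (hθc.mono (Icc_subset_Icc_left heps0.le)).sub continuousOn_const
        · have h := step1 (eps T) (by rw [hmin]; exact ⟨heps0.le, le_rfl⟩)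
          have := T_add_eps_le_B (T := T)
          linarith
        · intro t ht hpos
          exact (hθ' t ⟨lt_trans heps0 ht.1, ht.2⟩).sub_const _
        · intro t ht hpos
          have hθB : Bb T < θ t := by linarith
          have hθlt : θ t < π / 2 := Real.arctan_lt_pi_div_two _
          have hwt : Ww T < w t := by
            have h := Real.strictMonoOn_tan
              ⟨by linarith [B_pos hT hT2], B_lt_pi_div_two hT2⟩
              ⟨by linarith [Real.neg_pi_div_two_lt_arctan (w t)], hθlt⟩ hθB
            rw [hθdef] at h
            simpa [Ww, Real.tan_arctan] using h
          set y := clamp (Kk T) (w t) with hy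
          have hyW : Ww T ≤ y := le_clamp hWK hwt.le
          have hy2 : 2 / Real.tan (eps T) ≤ y := (two_div_tan_eps_le_W hT hT2).trans hyW
          have hte : 0 < Real.tan (eps T) := tan_eps_pos hT hT2
          have htans : Real.tan (eps T) ≤ Real.tan t :=
            (Real.strictMonoOn_tan ⟨by linarith, by linarith⟩
              ⟨by linarith [heps0, ht.1], by linarith [ht.2]⟩ ht.1).le
          have hy0 : 0 < y := lt_of_lt_of_le hW0 hyW
          have h2' : 2 ≤ Real.tan t * y := by
            calc (2:ℝ) = Real.tan (eps T) * (2 / Real.tan (eps T)) := by field_simp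
              _ ≤ Real.tan (eps T) * y := mul_le_mul_of_nonneg_left hy2 hte.le
              _ ≤ Real.tan t * y := mul_le_mul_of_nonneg_right htans hy0.le
          have h2 : 2 ≤ m * Real.tan t * y := by nlinarith
          have hvneg : vf m t y ≤ 0 := by
            rw [vf]
            exact mul_nonpos_of_nonneg_of_nonpos (by positivity) (by linarith)
          exact mul_nonpos_of_nonneg_of_nonpos (by positivity) hvneg
      have h := key s ⟨by rw [hmin] at hcase; exact hcase.le, hs.2⟩
      linarith
  -- lower bound on [0, a]
  have lower : ∀ s ∈ Icc 0 a, -(Bb T) ≤ θ s := by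
    have key : ∀ s ∈ Icc 0 a, -(θ s) - Bb T ≤ 0 := by
      apply no_upcross (G := fun s => -((1 + (w s) ^ 2)⁻¹ * vf m s (clamp (Kk T) (w s))))
      · exact hθc.neg.sub continuousOn_const
      · have h := (abs_le.1 hw0).1
        have h2 := T_add_eps_le_B (T := T)
        have h3 := eps_pos hT2
        simp only [hθdef]
        linarith
      · intro s hs hpos
        exact ((hθ' s hs).neg).sub_const _
      · intro s hs hpos
        have hθneg : θ s < -(Bb T) := by linarith
        have hB0 := B_pos hT hT2
        have hwn : w s < 0 := by
          by_contra hc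
          push_neg at hc
          have : (0:ℝ) ≤ θ s := by
            have := Real.arctan_strictMono.monotone hc
            simpa [hθdef] using this
          linarith
        set y := clamp (Kk T) (w s) with hy
        have hy0 : y ≤ 0 := clamp_nonpos hK0.le hwn.le
        have htan : 0 ≤ Real.tan s :=
          Real.tan_nonneg_of_nonneg_of_le_pi_div_two hs.1.le (by linarith [hs.2])
        have hP : m * Real.tan s * y ≤ 0 :=
          mul_nonpos_of_nonneg_of_nonpos (mul_nonneg hm0.le htan) hy0
        have hvf : 0 ≤ vf m s y := by
          rw [vf]
          exact mul_nonneg (by positivity) (by linarith)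
        exact neg_nonpos.2 (mul_nonneg (by positivity) hvf)
    intro s hs
    have := key s hs
    linarith
  intro s hs
  exact abs_le.2 ⟨lower s hs, upper s hs⟩

/-- Lipschitz bound for the field on a bounded interval. -/
lemma field_lipschitz {m c₀ M t : ℝ} (hm : 0 ≤ m) (hc₀ : 0 ≤ c₀) (hM : 0 ≤ M)
    (ht : |Real.tan t| ≤ c₀) :
    LipschitzOnWith (Real.toNNReal (2 * M * (1 + m * c₀ * M) + m * c₀ * (1 + M ^ 2)))
      (fun x => vf m t x) (Icc (-M) M) := by
  set c := m * Real.tan t with hc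
  have hcabs : |c| ≤ m * c₀ := by
    rw [hc, abs_mul, abs_of_nonneg hm]
    exact mul_le_mul_of_nonneg_left ht hm
  set Lr := 2 * M * (1 + m * c₀ * M) + m * c₀ * (1 + M ^ 2) with hLr
  have hmc₀ : 0 ≤ m * c₀ := mul_nonneg hm hc₀
  have hLr0 : 0 ≤ Lr := by
    have : (0:ℝ) ≤ 1 + m * c₀ * M := by positivity
    positivity
  apply Convex.lipschitzOnWith_of_nnnorm_hasDerivWithin_le (convex_Icc _ _)
    (f' := fun x => 2 * x * (1 - c * x) - c * (1 + x ^ 2))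
  · intro x hx
    have h1 : HasDerivAt (fun x : ℝ => 1 + x ^ 2) (2 * x) x := by
      simpa using (hasDerivAt_pow 2 x).const_add 1
    have h2 : HasDerivAt (fun x : ℝ => 1 - c * x) (-c) x := by
      simpa using ((hasDerivAt_id x).const_mul c).const_sub 1
    have h3 := h1.mul h2
    have : HasDerivAt (fun x => vf m t x) (2 * x * (1 - c * x) - c * (1 + x ^ 2)) x := by
      simp only [vf, ← hc]
      have h3' : HasDerivAt (fun y => (1 + y ^ 2) * (1 - c * y))
          (2 * x * (1 - c * x) + (1 + x ^ 2) * -c) x := h3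
      convert h3' using 1
      ring
    exact this.hasDerivWithinAt
  · intro x hx
    rw [← NNReal.coe_le_coe, coe_nnnorm, Real.norm_eq_abs, Real.coe_toNNReal _ hLr0]
    have hxM : |x| ≤ M := abs_le.2 ⟨hx.1, hx.2⟩
    have e1 : |2 * x * (1 - c * x)| ≤ 2 * M * (1 + m * c₀ * M) := by
      rw [abs_mul, abs_mul]
      have h1 : |(2:ℝ)| = 2 := by norm_num
      have h2 : |1 - c * x| ≤ 1 + m * c₀ * M := by
        calc |1 - c * x| ≤ |(1:ℝ)| + |c * x| := abs_sub _ _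
          _ = 1 + |c| * |x| := by rw [abs_one, abs_mul]
          _ ≤ 1 + (m * c₀) * M := by
              have := mul_le_mul hcabs hxM (abs_nonneg x) hmc₀
              linarith
      rw [h1]
      have h2x : 0 ≤ |x| := abs_nonneg x
      have h1c : 0 ≤ |1 - c * x| := abs_nonneg _
      nlinarith
    have e2 : |c * (1 + x ^ 2)| ≤ m * c₀ * (1 + M ^ 2) := by
      rw [abs_mul]
      have h1 : |1 + x ^ 2| = 1 + x ^ 2 := abs_of_nonneg (by positivity)
      have h2 : x ^ 2 ≤ M ^ 2 := by
        rw [← sq_abs]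
        exact pow_le_pow_left₀ (abs_nonneg x) hxM 2
      rw [h1]
      have := abs_nonneg c
      nlinarith
    calc |2 * x * (1 - c * x) - c * (1 + x ^ 2)|
        ≤ |2 * x * (1 - c * x)| + |c * (1 + x ^ 2)| := abs_sub _ _
      _ ≤ Lr := by rw [hLr]; linarith

/-- Existence of a solution of the (unclamped) ODE on `Ioo (-a) a`, with the a priori bound. -/
lemma exists_sol {m T w₀ : ℝ} (hm : 1 ≤ m) (hT : 0 ≤ T) (hT2 : T < π / 2)
    (hw₀ : |Real.arctan w₀| ≤ T) {a : ℝ} (ha : 0 < a) (ha2 : a < π / 2) :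
    ∃ f : ℝ → ℝ, f 0 = w₀ ∧ ∀ s ∈ Ioo (-a) a,
      HasDerivAt f (vf m s (f s)) s ∧ |f s| ≤ Ww T := by
  have hπ := Real.pi_pos
  have hm0 : (0:ℝ) < m := lt_of_lt_of_le one_pos hm
  have hW0 : 0 < Ww T := W_pos hT hT2
  have hK0 : 0 < Kk T := K_pos hT hT2
  have hWK : Ww T ≤ Kk T := by rw [Kk]; linarith
  have htA : 0 < Real.tan a := Real.tan_pos_of_pos_of_lt_pi_div_two ha ha2
  have hC0 : 0 < (1 + Kk T ^ 2) * (1 + m * Real.tan a * Kk T) := by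
    have h1 : 0 < 1 + m * Real.tan a * Kk T := by
      have := mul_pos (mul_pos hm0 htA) hK0; linarith
    exact mul_pos (by positivity) h1
  have hclampL : LipschitzWith 1 (clamp (Kk T)) := by
    have h := (LipschitzWith.id.const_min (Kk T)).const_max (-(Kk T))
    exact h
  have hpl : IsPicardLindelof (fun t x => vf m t (clamp (Kk T) x)) (tmin := -a) (tmax := a)
      ⟨0, by constructor <;> linarith⟩ w₀
      (Real.toNNReal ((1 + Kk T ^ 2) * (1 + m * Real.tan a * Kk T) * a)) 0
      (Real.toNNReal ((1 + Kk T ^ 2) * (1 + m * Real.tan a * Kk T)))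
      (Real.toNNReal (2 * Kk T * (1 + m * Real.tan a * Kk T) + m * Real.tan a * (1 + Kk T ^ 2))) :=
    { lipschitzOnWith := by
        intro t ht
        have habs : |Real.tan t| ≤ Real.tan a :=
          abs_tan_le (abs_le.2 ⟨by linarith [ht.1], ht.2⟩) ha2
        have hfield := field_lipschitz (M := Kk T) hm0.le htA.le hK0.le habs
        have hcomp := hfield.comp (hclampL.lipschitzOnWith (s := univ))
          (fun x _ => mem_Icc.2 (abs_le.1 (abs_clamp_le hK0.le)))
        have hcomp' := hcomp.mono
          (subset_univ (Metric.closedBall w₀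
            (((1 + Kk T ^ 2) * (1 + m * Real.tan a * Kk T) * a).toNNReal : ℝ)))
        simpa [mul_one, Function.comp_def] using hcomp'
      continuousOn := by
        intro x hx
        have htan : ContinuousOn Real.tan (Icc (-a) a) :=
          Real.continuousOn_tan_Ioo.mono
            (fun t ht => ⟨by simp only [mem_Icc] at ht; linarith [ht.1],
              lt_of_le_of_lt ht.2 ha2⟩)
        simp only [vf]
        exact continuousOn_const.mul
          (continuousOn_const.sub ((continuousOn_const.mul htan).mul continuousOn_const))
      norm_le := by
        intro t ht x hx
        have habs : |Real.tan t| ≤ Real.tan a :=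
          abs_tan_le (abs_le.2 ⟨by linarith [ht.1], ht.2⟩) ha2
        rw [Real.coe_toNNReal _ hC0.le]
        rw [Real.norm_eq_abs]
        have hyK : |clamp (Kk T) x| ≤ Kk T := abs_clamp_le hK0.le
        have h1 : |1 + clamp (Kk T) x ^ 2| ≤ 1 + Kk T ^ 2 := by
          rw [abs_of_nonneg (by positivity)]
          have : clamp (Kk T) x ^ 2 ≤ Kk T ^ 2 := by
            rw [← sq_abs]; exact pow_le_pow_left₀ (abs_nonneg _) hyK 2
          linarith
        have h2 : |1 - m * Real.tan t * clamp (Kk T) x| ≤ 1 + m * Real.tan a * Kk T := by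
          calc |1 - m * Real.tan t * clamp (Kk T) x|
              ≤ |(1:ℝ)| + |m * Real.tan t * clamp (Kk T) x| := abs_sub _ _
            _ = 1 + m * |Real.tan t| * |clamp (Kk T) x| := by
                rw [abs_one, abs_mul, abs_mul, abs_of_nonneg hm0.le]
            _ ≤ 1 + m * Real.tan a * Kk T := by
                have hXY : |Real.tan t| * |clamp (Kk T) x| ≤ Real.tan a * Kk T :=
                  mul_le_mul habs hyK (abs_nonneg _) htA.le
                nlinarith [mul_le_mul_of_nonneg_left hXY hm0.le]
        simp only [vf, abs_mul]
        exact mul_le_mul h1 h2 (abs_nonneg _) (by positivity)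
      mul_max_le := by
        rw [Real.coe_toNNReal _ hC0.le, Real.coe_toNNReal _ (mul_pos hC0 ha).le]
        simp }
  obtain ⟨f, hf0', hfd⟩ := hpl.exists_eq_forall_mem_Icc_hasDerivWithinAt₀
  have hf0 : f 0 = w₀ := hf0'
  have hfc : ContinuousOn f (Icc (-a) a) := fun t ht => (hfd t ht).continuousWithinAt
  have hfd' : ∀ t ∈ Ioo (-a) a, HasDerivAt f (vf m t (clamp (Kk T) (f t))) t := fun t ht =>
    (hfd t (Ioo_subset_Icc_self ht)).hasDerivAt (Icc_mem_nhds ht.1 ht.2)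
  have hbound_pos : ∀ s ∈ Icc 0 a, |Real.arctan (f s)| ≤ Bb T := by
    apply theta_bound hm hT hT2 ha ha2 (hfc.mono (Icc_subset_Icc (by linarith) le_rfl))
      (fun s hs => hfd' s ⟨by linarith [hs.1], hs.2⟩)
    rw [hf0]; exact hw₀
  have hgc : ContinuousOn (fun s => -f (-s)) (Icc 0 a) := by
    apply ContinuousOn.neg
    apply hfc.comp continuous_neg.continuousOn
    intro s hs
    simp only [mem_Icc] at hs ⊢
    constructor <;> linarith [hs.1, hs.2]
  have hgd : ∀ s ∈ Ioo 0 a, HasDerivAt (fun s => -f (-s))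
      (vf m s (clamp (Kk T) (-f (-s)))) s := by
    intro s hs
    have hns : -s ∈ Ioo (-a) a := ⟨by linarith [hs.2], by linarith [hs.1]⟩
    have h1 := (hfd' (-s) hns).comp s (hasDerivAt_neg s)
    have h2 : HasDerivAt (fun x : ℝ => -f (-x))
        (vf m (-s) (clamp (Kk T) (f (-s)))) s := by
      have h3 := h1.neg
      simp only [Function.comp_def] at h3
      exact h3.congr_deriv (by ring)
    have hval : vf m s (clamp (Kk T) (-f (-s))) = vf m (-s) (clamp (Kk T) (f (-s))) := by
      rw [clamp_neg hK0.le]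
      simp only [vf, Real.tan_neg]
      ring
    rw [hval]
    exact h2
  have hbound_neg : ∀ s ∈ Icc 0 a, |Real.arctan (-f (-s))| ≤ Bb T := by
    apply theta_bound hm hT hT2 ha ha2 hgc hgd
    simp only [neg_zero, hf0, Real.arctan_neg, abs_neg]
    exact hw₀
  refine ⟨f, hf0, fun s hs => ?_⟩
  have habs : |Real.arctan (f s)| ≤ Bb T := by
    rcases le_or_gt 0 s with h | h
    · exact hbound_pos s ⟨h, hs.2.le⟩
    · have h2 := hbound_neg (-s) ⟨by linarith, by linarith [hs.1]⟩
      simp only [neg_neg, Real.arctan_neg, abs_neg] at h2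
      exact h2
  have hfW : |f s| ≤ Ww T := by
    have hB2 := B_lt_pi_div_two hT2
    have hB0 := B_pos hT hT2
    rcases abs_le.1 habs with ⟨hl, hr⟩
    have hmem : Real.arctan (f s) ∈ Ioo (-(π/2)) (π/2) := Real.arctan_mem_Ioo _
    have hup : Real.tan (Real.arctan (f s)) ≤ Real.tan (Bb T) := by
      rcases eq_or_lt_of_le hr with h' | h'
      · rw [h']
      · exact (Real.strictMonoOn_tan hmem ⟨by linarith, hB2⟩ h').le
    have hlo : Real.tan (-(Bb T)) ≤ Real.tan (Real.arctan (f s)) := by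
      rcases eq_or_lt_of_le hl with h' | h'
      · rw [← h']
      · exact (Real.strictMonoOn_tan ⟨by linarith, by linarith⟩ hmem h').le
    rw [Real.tan_arctan] at hup hlo
    rw [Real.tan_neg] at hlo
    exact abs_le.2 ⟨hlo, hup⟩
  have hcl : clamp (Kk T) (f s) = f s := clamp_eq_self (hfW.trans hWK)
  have hd := hfd' s hs
  rw [hcl] at hd
  exact ⟨hd, hfW⟩

/-- Uniqueness of bounded solutions. -/
lemma sol_unique {m W : ℝ} (hm : 1 ≤ m) (hW : 0 ≤ W) {a a' : ℝ} (ha : 0 < a)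
    (ha2 : a < π / 2) (haa' : a ≤ a') (ha2' : a' < π / 2) {f g : ℝ → ℝ}
    (hf : ∀ s ∈ Ioo (-a) a, HasDerivAt f (vf m s (f s)) s ∧ |f s| ≤ W)
    (hg : ∀ s ∈ Ioo (-a') a', HasDerivAt g (vf m s (g s)) s ∧ |g s| ≤ W)
    (heq : f 0 = g 0) : EqOn f g (Ioo (-a) a) := by
  have hπ := Real.pi_pos
  have hm0 : (0:ℝ) < m := lt_of_lt_of_le one_pos hm
  have htA : 0 < Real.tan a := Real.tan_pos_of_pos_of_lt_pi_div_two ha ha2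
  have hsub : Ioo (-a) a ⊆ Ioo (-a') a' := Ioo_subset_Ioo (by linarith) haa'
  apply ODE_solution_unique_of_mem_Ioo
    (v := vf m)
    (s := fun t => if t ∈ Ioo (-a) a then Icc (-W) W else (∅ : Set ℝ))
    (K := Real.toNNReal (2 * W * (1 + m * Real.tan a * W) + m * Real.tan a * (1 + W ^ 2)))
    (t₀ := 0)
  · intro t _
    by_cases h : t ∈ Ioo (-a) a
    · rw [if_pos h]
      have habs : |Real.tan t| ≤ Real.tan a :=
        abs_tan_le (abs_le.2 ⟨h.1.le, h.2.le⟩) ha2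
      exact field_lipschitz hm0.le htA.le hW habs
    · rw [if_neg h]
      exact lipschitzOnWith_empty _ _
  · exact ⟨by linarith, ha⟩
  · intro t ht
    refine ⟨(hf t ht).1, ?_⟩
    rw [if_pos ht]
    exact mem_Icc.2 (abs_le.1 (hf t ht).2)
  · intro t ht
    refine ⟨(hg t (hsub ht)).1, ?_⟩
    rw [if_pos ht]
    exact mem_Icc.2 (abs_le.1 (hg t (hsub ht)).2)
  · exact heq

end
end SphereSolitonAux

open SphereSolitonAux in
/-- Every solution of `w' = (1 + w²)(1 − (n−1)·tan(s)·w)` with initial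
value `w(0) = w₀` extends to the whole interval `(−π/2, π/2)`. -/
theorem sphere_soliton_ODE_global_solution
    (n : ℕ) (hn : 2 ≤ n) :
    ∀ w₀ : ℝ, ∃ w : ℝ → ℝ,
      ContDiffOn ℝ 1 w (Set.Ioo (-(Real.pi / 2)) (Real.pi / 2)) ∧
      w 0 = w₀ ∧
      ∀ s ∈ Set.Ioo (-(Real.pi / 2)) (Real.pi / 2),
        HasDerivAt w ((1 + w s ^ 2) * (1 - ((n : ℝ) - 1) * Real.tan s * w s)) s := by
  intro w₀
  have hπ := Real.pi_pos
  set m : ℝ := (n : ℝ) - 1 with hmdef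
  have hm : 1 ≤ m := by
    have : (2:ℝ) ≤ (n:ℝ) := by exact_mod_cast hn
    rw [hmdef]; linarith
  set T : ℝ := |Real.arctan w₀| with hTdef
  have hT : 0 ≤ T := abs_nonneg _
  have hT2 : T < π / 2 :=
    abs_lt.2 ⟨Real.neg_pi_div_two_lt_arctan w₀, Real.arctan_lt_pi_div_two w₀⟩
  have hw₀T : |Real.arctan w₀| ≤ T := le_of_eq hTdef
  -- family of solutions
  have hex : ∀ a : ℝ, 0 < a → a < π / 2 → ∃ f : ℝ → ℝ, f 0 = w₀ ∧
      ∀ s ∈ Ioo (-a) a, HasDerivAt f (vf m s (f s)) s ∧ |f s| ≤ Ww T :=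
    fun a ha ha2 => exists_sol hm hT hT2 hw₀T ha ha2
  set F : ℝ → ℝ → ℝ := fun a => if h : 0 < a ∧ a < π / 2 then
    Classical.choose (hex a h.1 h.2) else 0 with hFdef
  have hF : ∀ a (h1 : 0 < a) (h2 : a < π / 2), F a 0 = w₀ ∧
      ∀ s ∈ Ioo (-a) a, HasDerivAt (F a) (vf m s (F a s)) s ∧ |F a s| ≤ Ww T := by
    intro a h1 h2
    rw [hFdef]
    simp only []
    rw [dif_pos (⟨h1, h2⟩ : 0 < a ∧ a < π / 2)]
    exact Classical.choose_spec (hex a h1 h2)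
  -- the glued solution
  set w : ℝ → ℝ := fun s => F ((|s| + π / 2) / 2) s with hwdef
  -- local identification
  have hW0 : 0 ≤ Ww T := (W_pos hT hT2).le
  have hkey : ∀ s₀ ∈ Ioo (-(π / 2)) (π / 2), HasDerivAt w (vf m s₀ (w s₀)) s₀ := by
    intro s₀ hs₀
    have habs0 : |s₀| < π / 2 := abs_lt.2 ⟨hs₀.1, hs₀.2⟩
    set c₀ : ℝ := (|s₀| + π / 2) / 2 with hc₀
    set A : ℝ := (c₀ + π / 2) / 2 with hA
    have hc₀1 : |s₀| < c₀ := by rw [hc₀]; linarith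
    have hc₀2 : c₀ < π / 2 := by rw [hc₀]; linarith
    have hc₀0 : 0 < c₀ := by rw [hc₀]; linarith [abs_nonneg s₀]
    have hA1 : c₀ < A := by rw [hA]; linarith
    have hA2 : A < π / 2 := by rw [hA]; linarith
    have hA0 : 0 < A := by linarith
    have hFA := hF A hA0 hA2
    -- the neighborhood
    set U : Set ℝ := {s | |s| < 2 * A - π / 2} with hU
    have hUopen : IsOpen U := by
      have : U = abs ⁻¹' Iio (2 * A - π / 2) := rfl
      rw [this]
      exact continuous_abs.isOpen_preimage _ isOpen_Iio
    have hs₀U : s₀ ∈ U := by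
      simp only [hU, mem_setOf_eq]
      have : 2 * A - π / 2 = c₀ := by rw [hA]; ring
      rw [this]; exact hc₀1
    have hUeq : ∀ s ∈ U, w s = F A s := by
      intro s hs
      simp only [hU, mem_setOf_eq] at hs
      have h2A : 2 * A - π / 2 ≤ π / 2 := by linarith
      have habs : |s| < π / 2 := lt_of_lt_of_le hs h2A
      set cs : ℝ := (|s| + π / 2) / 2 with hcs
      have hcs0 : 0 < cs := by rw [hcs]; linarith [abs_nonneg s]
      have hcs2 : cs < π / 2 := by rw [hcs]; linarith
      have hcsA : cs ≤ A := by
        rw [hcs]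
        have : |s| ≤ 2 * A - π / 2 := hs.le
        linarith
      have hFcs := hF cs hcs0 hcs2
      have hequ : EqOn (F cs) (F A) (Ioo (-cs) cs) :=
        sol_unique hm hW0 hcs0 hcs2 hcsA hA2 hFcs.2 hFA.2
          (by rw [hFcs.1, hFA.1])
      have hscs : s ∈ Ioo (-cs) cs := by
        have : |s| < cs := by rw [hcs]; linarith
        exact ⟨neg_lt_of_abs_lt this, lt_of_abs_lt this⟩
      exact hequ hscs
    have hs₀A : s₀ ∈ Ioo (-A) A := by
      have : |s₀| < A := by linarith
      exact ⟨neg_lt_of_abs_lt this, lt_of_abs_lt this⟩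
    have hdA : HasDerivAt (F A) (vf m s₀ (F A s₀)) s₀ := (hFA.2 s₀ hs₀A).1
    have hev : w =ᶠ[nhds s₀] F A :=
      Filter.eventuallyEq_of_mem (hUopen.mem_nhds hs₀U) hUeq
    have := hdA.congr_of_eventuallyEq hev
    rwa [← hUeq s₀ hs₀U] at this
  have hw0 : w 0 = w₀ := by
    have h0 : (0:ℝ) ∈ Ioo (-(π / 2)) (π / 2) := by constructor <;> linarith
    have hc : (|(0:ℝ)| + π / 2) / 2 = π / 4 := by simp; ring
    rw [hwdef]
    simp only [hc]
    exact (hF (π / 4) (by linarith) (by linarith)).1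
  have hIoo : IsOpen (Ioo (-(π / 2)) (π / 2)) := isOpen_Ioo
  have hdiff : DifferentiableOn ℝ w (Ioo (-(π / 2)) (π / 2)) :=
    fun s hs => ((hkey s hs).differentiableAt).differentiableWithinAt
  have hderiveq : ∀ s ∈ Ioo (-(π / 2)) (π / 2), deriv w s = vf m s (w s) :=
    fun s hs => (hkey s hs).deriv
  have hwc : ContinuousOn w (Ioo (-(π / 2)) (π / 2)) := hdiff.continuousOn
  have hvc : ContinuousOn (fun s => vf m s (w s)) (Ioo (-(π / 2)) (π / 2)) := by
    simp only [vf]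
    exact (continuousOn_const.add (hwc.pow 2)).mul
      (continuousOn_const.sub
        ((continuousOn_const.mul Real.continuousOn_tan_Ioo).mul hwc))
  refine ⟨w, ?_, hw0, fun s hs => ?_⟩
  · have h1 : (1 : WithTop ℕ∞) = 0 + 1 := by norm_num
    rw [h1, contDiffOn_succ_iff_deriv_of_isOpen hIoo]
    refine ⟨hdiff, by simp, ?_⟩
    rw [contDiffOn_zero]
    exact hvc.congr hderiveq
  · have := hkey s hs
    simpa [vf, hmdef] using this
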